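/- For the blow-up S_3 of ℙ² in 3 points in general position, Peyre's constant is α(S_3) = 1/72; that is, 4 · vol{x ∈ ℝ⁴ : B(E, x) ≥ 0 for every (−1)-class E, and 0 ≤ B(−K_3, x) ≤ 1} = 1/72, where vol is the standard Lebesgue measure on ℝ⁴. -/

import Mathlib

open scoped BigOperators
open MeasureTheory

/-- Intersection form on `ℤ^(n+1)` with basis `H, E₁, …, E_n`:
`B(x,y) = x₀y₀ - x₁y₁ - ⋯ - x_n y_n` (written as `2x₀y₀ - ∑ᵢ xᵢyᵢ`). -/
def interZ {n : ℕ} (x y : Fin (n + 1) → ℤ) : ℤ :=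
  2 * x 0 * y 0 - ∑ i, x i * y i

/-- The real intersection form on `ℝ^(n+1)`. -/
def interR {n : ℕ} (x y : Fin (n + 1) → ℝ) : ℝ :=
  2 * x 0 * y 0 - ∑ i, x i * y i

/-- The anticanonical class `-K = (3, -1, …, -1)`. -/
def antiK (n : ℕ) : Fin (n + 1) → ℤ := fun i => if i = 0 then 3 else -1

/-- The anticanonical class as a real vector. -/
def antiKR (n : ℕ) : Fin (n + 1) → ℝ := fun i => if i = 0 then 3 else -1

/-- A `(-1)`-class: `B(E,E) = -1` and `B(-K,E) = 1`. -/
def IsMinusOneClass {n : ℕ} (E : Fin (n + 1) → ℤ) : Prop :=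
  interZ E E = -1 ∧ interZ (antiK n) E = 1

/-- The nef cone: real vectors pairing nonnegatively with every `(-1)`-class. -/
def NefCone (n : ℕ) : Set (Fin (n + 1) → ℝ) :=
  {x | ∀ E : Fin (n + 1) → ℤ, IsMinusOneClass E → 0 ≤ interR (fun i => (E i : ℝ)) x}

/-! ### Auxiliary material -/

open scoped ENNReal

lemma interZ4 (x y : Fin (3+1) → ℤ) :
    interZ x y = x 0 * y 0 - x 1 * y 1 - x 2 * y 2 - x 3 * y 3 := by
  simp only [interZ]
  rw [Fin.sum_univ_four]
  ring

lemma interR4 (x y : Fin (3+1) → ℝ) :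
    interR x y = x 0 * y 0 - x 1 * y 1 - x 2 * y 2 - x 3 * y 3 := by
  simp only [interR]
  rw [Fin.sum_univ_four]
  ring

lemma antiK_vals : antiK 3 0 = 3 ∧ antiK 3 1 = -1 ∧ antiK 3 2 = -1 ∧ antiK 3 3 = -1 :=
  ⟨by decide, by decide, by decide, by decide⟩

lemma antiKR_omega (x : Fin (3+1) → ℝ) :
    interR (antiKR 3) x = 3 * x 0 + x 1 + x 2 + x 3 := by
  rw [interR4]
  have h0 : antiKR 3 0 = 3 := rfl
  have h1 : antiKR 3 1 = -1 := by simp [antiKR, Fin.ext_iff]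
  have h2 : antiKR 3 2 = -1 := by simp [antiKR, Fin.ext_iff]
  have h3 : antiKR 3 3 = -1 := by
    show (if (3 : Fin (3+1)) = 0 then (3:ℝ) else -1) = -1
    rw [if_neg (by decide)]
  rw [h0, h1, h2, h3]; ring

set_option maxHeartbeats 800000 in
lemma classify (E : Fin (3+1) → ℤ) (h : IsMinusOneClass E) :
    (E 0 = 0 ∧ E 1 = 1 ∧ E 2 = 0 ∧ E 3 = 0) ∨
    (E 0 = 0 ∧ E 1 = 0 ∧ E 2 = 1 ∧ E 3 = 0) ∨
    (E 0 = 0 ∧ E 1 = 0 ∧ E 2 = 0 ∧ E 3 = 1) ∨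
    (E 0 = 1 ∧ E 1 = -1 ∧ E 2 = -1 ∧ E 3 = 0) ∨
    (E 0 = 1 ∧ E 1 = -1 ∧ E 2 = 0 ∧ E 3 = -1) ∨
    (E 0 = 1 ∧ E 1 = 0 ∧ E 2 = -1 ∧ E 3 = -1) := by
  obtain ⟨h1, h2⟩ := h
  rw [interZ4] at h1 h2
  obtain ⟨ka, kb, kc, kd⟩ := antiK_vals
  rw [ka, kb, kc, kd] at h2
  obtain ⟨a, b, c, d, ha, hb, hc, hd⟩ : ∃ a b c d, E 0 = a ∧ E 1 = b ∧ E 2 = c ∧ E 3 = d :=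
    ⟨_, _, _, _, rfl, rfl, rfl, rfl⟩
  rw [ha, hb, hc, hd] at h1 h2 ⊢
  have ha0 : 0 ≤ a := by
    nlinarith [sq_nonneg (b - c), sq_nonneg (b - d), sq_nonneg (c - d), sq_nonneg (a + 1)]
  have ha1 : a ≤ 1 := by
    nlinarith [sq_nonneg (b - c), sq_nonneg (b - d), sq_nonneg (c - d), sq_nonneg (a - 2)]
  have hd3 : d = 1 - 3 * a - b - c := by linarith
  subst hd3
  interval_cases a
  · have hb' : -1 ≤ b ∧ b ≤ 1 := by
      constructor <;> nlinarith [sq_nonneg c, sq_nonneg (1 - b - c)]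
    have hc' : -1 ≤ c ∧ c ≤ 1 := by
      constructor <;> nlinarith [sq_nonneg b, sq_nonneg (1 - b - c)]
    obtain ⟨hb1, hb2⟩ := hb'; obtain ⟨hc1, hc2⟩ := hc'
    interval_cases b <;> interval_cases c <;> omega
  · have hb' : -2 ≤ b ∧ b ≤ 1 := by
      constructor <;> nlinarith [sq_nonneg c, sq_nonneg (-2 - b - c)]
    have hc' : -2 ≤ c ∧ c ≤ 1 := by
      constructor <;> nlinarith [sq_nonneg b, sq_nonneg (-2 - b - c)]
    obtain ⟨hb1, hb2⟩ := hb'; obtain ⟨hc1, hc2⟩ := hc'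
    interval_cases b <;> interval_cases c <;> omega

lemma class_e1 : IsMinusOneClass (![0,1,0,0] : Fin (3+1) → ℤ) := by
  constructor <;> rw [interZ4] <;> decide
lemma class_e2 : IsMinusOneClass (![0,0,1,0] : Fin (3+1) → ℤ) := by
  constructor <;> rw [interZ4] <;> decide
lemma class_e3 : IsMinusOneClass (![0,0,0,1] : Fin (3+1) → ℤ) := by
  constructor <;> rw [interZ4] <;> decide
lemma class_l12 : IsMinusOneClass (![1,-1,-1,0] : Fin (3+1) → ℤ) := by
  constructor <;> rw [interZ4] <;> decide
lemma class_l13 : IsMinusOneClass (![1,-1,0,-1] : Fin (3+1) → ℤ) := by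
  constructor <;> rw [interZ4] <;> decide
lemma class_l23 : IsMinusOneClass (![1,0,-1,-1] : Fin (3+1) → ℤ) := by
  constructor <;> rw [interZ4] <;> decide

lemma nefCone_eq : NefCone 3 = {x : Fin (3+1) → ℝ |
    x 1 ≤ 0 ∧ x 2 ≤ 0 ∧ x 3 ≤ 0 ∧
    0 ≤ x 0 + x 1 + x 2 ∧ 0 ≤ x 0 + x 1 + x 3 ∧ 0 ≤ x 0 + x 2 + x 3} := by
  ext x
  constructor
  · intro hx
    have h1 := hx _ class_e1
    have h2 := hx _ class_e2
    have h3 := hx _ class_e3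
    have h4 := hx _ class_l12
    have h5 := hx _ class_l13
    have h6 := hx _ class_l23
    rw [interR4] at h1 h2 h3 h4 h5 h6
    norm_num [Matrix.cons_val_three, Matrix.cons_val_two, Matrix.vecHead, Matrix.vecTail] at h1 h2 h3 h4 h5 h6
    refine ⟨by linarith, by linarith, by linarith, by linarith, by linarith, by linarith⟩
  · rintro ⟨p1, p2, p3, p4, p5, p6⟩ E hE
    rw [interR4]
    rcases classify E hE with ⟨a,b,c,d⟩|⟨a,b,c,d⟩|⟨a,b,c,d⟩|⟨a,b,c,d⟩|⟨a,b,c,d⟩|⟨a,b,c,d⟩ <;>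
      rw [a, b, c, d] <;> push_cast <;> linarith

/-! ### Volume of the order simplex via permutation tiling -/

/-- corner simplex -/
def cornerSimplex : Set (Fin 4 → ℝ) := {t | (∀ i, 0 ≤ t i) ∧ ∑ i, t i ≤ 1}

def chainSet : Set (Fin 4 → ℝ) :=
  {s | 0 ≤ s 0 ∧ s 0 ≤ s 1 ∧ s 1 ≤ s 2 ∧ s 2 ≤ s 3 ∧ s 3 ≤ 1}

lemma chainSet_measurable : MeasurableSet chainSet := by
  have : chainSet = {s : Fin 4 → ℝ | 0 ≤ s 0} ∩ ({s | s 0 ≤ s 1} ∩ ({s | s 1 ≤ s 2} ∩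
      ({s | s 2 ≤ s 3} ∩ {s | s 3 ≤ 1}))) := by
    ext s; simp [chainSet, and_assoc]
  rw [this]
  refine (measurableSet_le measurable_const (measurable_pi_apply 0)).inter
    ((measurableSet_le (measurable_pi_apply 0) (measurable_pi_apply 1)).inter
    ((measurableSet_le (measurable_pi_apply 1) (measurable_pi_apply 2)).inter
    ((measurableSet_le (measurable_pi_apply 2) (measurable_pi_apply 3)).inter
    (measurableSet_le (measurable_pi_apply 3) measurable_const))))

lemma chainSet_bounds {s : Fin 4 → ℝ} (hs : s ∈ chainSet) : ∀ k, 0 ≤ s k ∧ s k ≤ 1 := by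
  obtain ⟨h1, h2, h3, h4, h5⟩ := hs
  intro k
  fin_cases k
  · exact ⟨h1, show s 0 ≤ 1 by linarith⟩
  · exact ⟨show (0:ℝ) ≤ s 1 by linarith, show s 1 ≤ 1 by linarith⟩
  · exact ⟨show (0:ℝ) ≤ s 2 by linarith, show s 2 ≤ 1 by linarith⟩
  · exact ⟨show (0:ℝ) ≤ s 3 by linarith, h5⟩

set_option linter.unreachableTactic false in
set_option linter.unusedTactic false in
lemma chainSet_monotone {s : Fin 4 → ℝ} (hs : s ∈ chainSet) : Monotone s := by
  obtain ⟨h1, h2, h3, h4, h5⟩ := hs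
  intro a b hab
  rcases a with ⟨av, hA⟩; rcases b with ⟨bv, hB⟩
  have hab' : av ≤ bv := hab
  interval_cases av <;> interval_cases bv <;>
    first
      | exact le_rfl
      | exact h2
      | exact h3
      | exact h4
      | exact le_trans h2 h3
      | exact le_trans h3 h4
      | exact le_trans h2 (le_trans h3 h4)
      | omega

lemma monotone_chain {s : Fin 4 → ℝ} (hm : Monotone s) (h0 : 0 ≤ s 0) (h3 : s 3 ≤ 1) :
    s ∈ chainSet :=
  ⟨h0, hm (by decide), hm (by decide), hm (by decide), h3⟩

/-- the permuted copy -/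
def permSet (σ : Equiv.Perm (Fin 4)) : Set (Fin 4 → ℝ) := {x | x ∘ σ ∈ chainSet}

lemma comp_measurePreserving (σ : Equiv.Perm (Fin 4)) :
    MeasurePreserving (fun x : Fin 4 → ℝ => x ∘ σ) volume volume := by
  have h := volume_measurePreserving_piCongrLeft (fun _ : Fin 4 => ℝ) σ.symm
  have he : ⇑(MeasurableEquiv.piCongrLeft (fun _ : Fin 4 => ℝ) σ.symm) = fun x => x ∘ σ := by
    funext x; ext i
    simp [MeasurableEquiv.coe_piCongrLeft, Equiv.piCongrLeft_apply_eq_cast]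
  rwa [he] at h

lemma permSet_volume (σ : Equiv.Perm (Fin 4)) : volume (permSet σ) = volume chainSet :=
  (comp_measurePreserving σ).measure_preimage chainSet_measurable.nullMeasurableSet

lemma hyperplane_null (i j : Fin 4) (hij : i ≠ j) : volume {x : Fin 4 → ℝ | x i = x j} = 0 := by
  have h : {x : Fin 4 → ℝ | x i = x j} =
      ↑(LinearMap.ker ((LinearMap.proj i : (Fin 4 → ℝ) →ₗ[ℝ] ℝ) - LinearMap.proj j)) := by
    ext x
    simp [LinearMap.mem_ker, sub_eq_zero]
  rw [h]
  refine Measure.addHaar_submodule _ _ ?_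
  intro htop
  have h1 : (Pi.single i 1 : Fin 4 → ℝ) ∈ LinearMap.ker
      ((LinearMap.proj i : (Fin 4 → ℝ) →ₗ[ℝ] ℝ) - LinearMap.proj j) := by
    rw [htop]; trivial
  simp [LinearMap.mem_ker, Pi.single_apply, hij, (Ne.symm hij)] at h1

lemma cube_eq_union : Set.Icc (0 : Fin 4 → ℝ) 1 = ⋃ σ : Equiv.Perm (Fin 4), permSet σ := by
  ext x
  simp only [Set.mem_Icc, Set.mem_iUnion]
  constructor
  · rintro ⟨hx0, hx1⟩
    exact ⟨Tuple.sort x, monotone_chain (Tuple.monotone_sort x) (hx0 _) (hx1 _)⟩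
  · rintro ⟨σ, hσ⟩
    have hb := chainSet_bounds hσ
    constructor <;> intro i <;>
      [exact (by simpa using (hb (σ.symm i)).1);
       exact (by simpa using (hb (σ.symm i)).2)]

lemma permSet_aedisjoint : Pairwise (Function.onFun (AEDisjoint volume) permSet) := by
  intro σ τ hστ
  have hsub : permSet σ ∩ permSet τ ⊆ ⋃ (i : Fin 4) (j : Fin 4) (_ : i ≠ j), {x | x i = x j} := by
    rintro x ⟨hσ, hτ⟩
    have hmσ : Monotone (x ∘ σ) := chainSet_monotone hσ
    have hmτ : Monotone (x ∘ τ) := chainSet_monotone hτ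
    have heq : x ∘ σ = x ∘ τ := Tuple.unique_monotone hmσ hmτ
    have hex : ∃ i, σ i ≠ τ i := by
      by_contra hc
      push_neg at hc
      exact hστ (Equiv.ext hc)
    obtain ⟨i, hi⟩ := hex
    exact Set.mem_iUnion.2 ⟨σ i, Set.mem_iUnion.2 ⟨τ i, Set.mem_iUnion.2 ⟨hi, congrFun heq i⟩⟩⟩
  refine measure_mono_null hsub ?_
  refine measure_iUnion_null fun i => measure_iUnion_null fun j => ?_
  by_cases hij : i = j
  · simp [hij]
  · simpa [hij] using hyperplane_null i j hij

lemma chainSet_volume : volume chainSet = (24 : ℝ≥0∞)⁻¹ := by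
  have hcube : volume (Set.Icc (0 : Fin 4 → ℝ) 1) = 1 := by
    rw [Real.volume_Icc_pi]
    norm_num
  rw [cube_eq_union] at hcube
  have hmeas : ∀ σ : Equiv.Perm (Fin 4), NullMeasurableSet (permSet σ) volume := by
    intro σ
    exact ((chainSet_measurable.preimage (measurable_pi_lambda _
      (fun i => measurable_pi_apply _)))).nullMeasurableSet
  rw [measure_iUnion₀ permSet_aedisjoint hmeas] at hcube
  simp only [permSet_volume] at hcube
  rw [tsum_fintype] at hcube
  rw [Finset.sum_const, Finset.card_univ] at hcube
  have hcard : Fintype.card (Equiv.Perm (Fin 4)) = 24 := by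
    simp [Fintype.card_perm, Fintype.card_fin]
    decide
  rw [hcard] at hcube
  have h24 : (24 : ℕ) • volume chainSet = (24 : ℝ≥0∞) * volume chainSet := by
    rw [nsmul_eq_mul]; norm_num
  rw [h24] at hcube
  have hfin : (24 : ℝ≥0∞)⁻¹ * ((24 : ℝ≥0∞) * volume chainSet) = (24 : ℝ≥0∞)⁻¹ * 1 := by
    rw [hcube]
  rwa [← mul_assoc, ENNReal.inv_mul_cancel (by norm_num) (by norm_num), one_mul, mul_one] at hfin

/-! ### The three linear maps -/

def MV : Matrix (Fin 4) (Fin 4) ℝ := !![1,0,0,0; 1,1,0,0; 1,1,1,0; 1,1,1,1]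
def MA : Matrix (Fin 4) (Fin 4) ℝ := !![3,3,3,3; 0,-2,0,0; 0,0,-2,0; 0,0,0,-2]
def MB : Matrix (Fin 4) (Fin 4) ℝ := !![-3,-3,-3,-3; 2,0,2,2; 2,2,0,2; 2,2,2,0]

lemma MV_apply (x : Fin 4 → ℝ) :
    Matrix.toLin' MV x 0 = x 0 ∧ Matrix.toLin' MV x 1 = x 0 + x 1 ∧
    Matrix.toLin' MV x 2 = x 0 + x 1 + x 2 ∧ Matrix.toLin' MV x 3 = x 0 + x 1 + x 2 + x 3 := by
  refine ⟨?_, ?_, ?_, ?_⟩ <;>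
    simp [MV, Matrix.toLin'_apply, Matrix.mulVec, dotProduct, Fin.sum_univ_four] <;>
    ring

lemma MA_apply (x : Fin 4 → ℝ) :
    Matrix.toLin' MA x 0 = 3 * (x 0 + x 1 + x 2 + x 3) ∧ Matrix.toLin' MA x 1 = -2 * x 1 ∧
    Matrix.toLin' MA x 2 = -2 * x 2 ∧ Matrix.toLin' MA x 3 = -2 * x 3 := by
  refine ⟨?_, ?_, ?_, ?_⟩ <;>
    simp [MA, Matrix.toLin'_apply, Matrix.mulVec, dotProduct, Fin.sum_univ_four] <;>
    ring

lemma MB_apply (x : Fin 4 → ℝ) :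
    Matrix.toLin' MB x 0 = -3 * (x 0 + x 1 + x 2 + x 3) ∧
    Matrix.toLin' MB x 1 = 2 * (x 0 + x 2 + x 3) ∧
    Matrix.toLin' MB x 2 = 2 * (x 0 + x 1 + x 3) ∧
    Matrix.toLin' MB x 3 = 2 * (x 0 + x 1 + x 2) := by
  refine ⟨?_, ?_, ?_, ?_⟩ <;>
    simp [MB, Matrix.toLin'_apply, Matrix.mulVec, dotProduct, Fin.sum_univ_four] <;>
    ring

lemma cornerSimplex_measurable : MeasurableSet cornerSimplex := by
  have h : cornerSimplex = (⋂ i, {t : Fin 4 → ℝ | 0 ≤ t i}) ∩ {t | ∑ i, t i ≤ 1} := by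
    ext t; simp [cornerSimplex, Set.mem_iInter]
  rw [h]
  exact (MeasurableSet.iInter (fun i =>
    measurableSet_le measurable_const (measurable_pi_apply i))).inter
    (measurableSet_le (Finset.measurable_sum Finset.univ (fun i _ => measurable_pi_apply i))
      measurable_const)

lemma cornerSimplex_volume : volume cornerSimplex = (24 : ℝ≥0∞)⁻¹ := by
  have hdet : LinearMap.det (Matrix.toLin' MV) = 1 := by
    rw [LinearMap.det_toLin']
    rw [Matrix.det_succ_row_zero]
    simp [MV, Fin.sum_univ_succ, Matrix.det_fin_three, Fin.succAbove]
  have hpre : cornerSimplex = (Matrix.toLin' MV) ⁻¹' chainSet := by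
    ext x
    obtain ⟨e0, e1, e2, e3⟩ := MV_apply x
    simp only [Set.mem_preimage, chainSet, Set.mem_setOf_eq, e0, e1, e2, e3, cornerSimplex]
    constructor
    · rintro ⟨hp, hs⟩
      rw [Fin.sum_univ_four] at hs
      exact ⟨hp 0, by linarith [hp 1], by linarith [hp 2], by linarith [hp 3], by linarith⟩
    · rintro ⟨c1, c2, c3, c4, c5⟩
      constructor
      · intro i
        fin_cases i
        · exact c1
        · exact show (0:ℝ) ≤ x 1 by linarith
        · exact show (0:ℝ) ≤ x 2 by linarith
        · exact show (0:ℝ) ≤ x 3 by linarith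
      · rw [Fin.sum_univ_four]; linarith
  rw [hpre, Measure.addHaar_preimage_linearMap volume (by rw [hdet]; norm_num) chainSet,
    chainSet_volume, hdet]
  norm_num

/-! ### The main theorem -/

lemma main_set_eq :
    {x : Fin (3 + 1) → ℝ | x ∈ NefCone 3 ∧
        0 ≤ interR (antiKR 3) x ∧ interR (antiKR 3) x ≤ 1} =
      (Matrix.toLin' MA) ⁻¹' cornerSimplex ∪ (Matrix.toLin' MB) ⁻¹' cornerSimplex := by
  ext x
  simp only [Set.mem_setOf_eq, Set.mem_union, Set.mem_preimage, nefCone_eq, antiKR_omega,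
    cornerSimplex]
  obtain ⟨a0, a1, a2, a3⟩ := MA_apply x
  obtain ⟨b0, b1, b2, b3⟩ := MB_apply x
  constructor
  · rintro ⟨⟨p1, p2, p3, p4, p5, p6⟩, hω0, hω1⟩
    by_cases hside : 0 ≤ x 0 + x 1 + x 2 + x 3
    · left
      constructor
      · intro i
        fin_cases i
        · exact show (0:ℝ) ≤ Matrix.toLin' MA x 0 by rw [a0]; linarith
        · exact show (0:ℝ) ≤ Matrix.toLin' MA x 1 by rw [a1]; linarith
        · exact show (0:ℝ) ≤ Matrix.toLin' MA x 2 by rw [a2]; linarith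
        · exact show (0:ℝ) ≤ Matrix.toLin' MA x 3 by rw [a3]; linarith
      · rw [Fin.sum_univ_four, a0, a1, a2, a3]; linarith
    · right
      constructor
      · intro i
        fin_cases i
        · exact show (0:ℝ) ≤ Matrix.toLin' MB x 0 by rw [b0]; linarith
        · exact show (0:ℝ) ≤ Matrix.toLin' MB x 1 by rw [b1]; linarith
        · exact show (0:ℝ) ≤ Matrix.toLin' MB x 2 by rw [b2]; linarith
        · exact show (0:ℝ) ≤ Matrix.toLin' MB x 3 by rw [b3]; linarith
      · rw [Fin.sum_univ_four, b0, b1, b2, b3]; linarith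
  · rintro (⟨hp, hs⟩ | ⟨hp, hs⟩)
    · have t0 := hp 0; have t1 := hp 1; have t2 := hp 2; have t3 := hp 3
      rw [a0] at t0; rw [a1] at t1; rw [a2] at t2; rw [a3] at t3
      rw [Fin.sum_univ_four, a0, a1, a2, a3] at hs
      exact ⟨⟨by linarith, by linarith, by linarith, by linarith, by linarith, by linarith⟩,
        by linarith, by linarith⟩
    · have t0 := hp 0; have t1 := hp 1; have t2 := hp 2; have t3 := hp 3
      rw [b0] at t0; rw [b1] at t1; rw [b2] at t2; rw [b3] at t3
      rw [Fin.sum_univ_four, b0, b1, b2, b3] at hs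
      exact ⟨⟨by linarith, by linarith, by linarith, by linarith, by linarith, by linarith⟩,
        by linarith, by linarith⟩

lemma sum_hyperplane_null : volume {x : Fin 4 → ℝ | x 0 + x 1 + x 2 + x 3 = 0} = 0 := by
  have h : {x : Fin 4 → ℝ | x 0 + x 1 + x 2 + x 3 = 0} =
      ↑(LinearMap.ker ((LinearMap.proj 0 : (Fin 4 → ℝ) →ₗ[ℝ] ℝ) + LinearMap.proj 1 +
        LinearMap.proj 2 + LinearMap.proj 3)) := by
    ext x
    simp [LinearMap.mem_ker]
  rw [h]
  refine Measure.addHaar_submodule _ _ ?_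
  intro htop
  have h1 : (fun _ => (1:ℝ) : Fin 4 → ℝ) ∈ LinearMap.ker
      ((LinearMap.proj 0 : (Fin 4 → ℝ) →ₗ[ℝ] ℝ) + LinearMap.proj 1 +
        LinearMap.proj 2 + LinearMap.proj 3) := by
    rw [htop]; trivial
  simp [LinearMap.mem_ker] at h1
  norm_num at h1

theorem alpha_S3 :
    4 * (volume {x : Fin (3 + 1) → ℝ | x ∈ NefCone 3 ∧
      0 ≤ interR (antiKR 3) x ∧ interR (antiKR 3) x ≤ 1}).toReal = 1 / 72 := by
  rw [main_set_eq]
  have hdetA : LinearMap.det (Matrix.toLin' MA) = -24 := by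
    rw [LinearMap.det_toLin']
    rw [Matrix.det_succ_row_zero]
    simp [MA, Fin.sum_univ_succ, Matrix.det_fin_three, Fin.succAbove]
    norm_num
  have hdetB : LinearMap.det (Matrix.toLin' MB) = 24 := by
    rw [LinearMap.det_toLin']
    rw [Matrix.det_succ_row_zero]
    simp [MB, Fin.sum_univ_succ, Matrix.det_fin_three, Fin.succAbove]
    norm_num
  have hAvol : volume ((Matrix.toLin' MA) ⁻¹' cornerSimplex) = ENNReal.ofReal (1/24) * (24:ℝ≥0∞)⁻¹ := by
    rw [Measure.addHaar_preimage_linearMap volume (by rw [hdetA]; norm_num) cornerSimplex,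
      cornerSimplex_volume, hdetA]
    norm_num [abs_of_nonneg]
  have hBvol : volume ((Matrix.toLin' MB) ⁻¹' cornerSimplex) = ENNReal.ofReal (1/24) * (24:ℝ≥0∞)⁻¹ := by
    rw [Measure.addHaar_preimage_linearMap volume (by rw [hdetB]; norm_num) cornerSimplex,
      cornerSimplex_volume, hdetB]
    norm_num [abs_of_nonneg]
  have hdisj : AEDisjoint volume ((Matrix.toLin' MA) ⁻¹' cornerSimplex)
      ((Matrix.toLin' MB) ⁻¹' cornerSimplex) := by
    refine measure_mono_null ?_ sum_hyperplane_null
    rintro x ⟨hA, hB⟩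
    obtain ⟨a0, _, _, _⟩ := MA_apply x
    obtain ⟨b0, _, _, _⟩ := MB_apply x
    have t0 := hA.1 0; rw [a0] at t0
    have s0 := hB.1 0; rw [b0] at s0
    show x 0 + x 1 + x 2 + x 3 = 0
    linarith
  have hBmeas : NullMeasurableSet ((Matrix.toLin' MB) ⁻¹' cornerSimplex) volume :=
    (cornerSimplex_measurable.preimage
      (Matrix.toLin' MB).continuous_of_finiteDimensional.measurable).nullMeasurableSet
  rw [measure_union₀ hBmeas hdisj, hAvol, hBvol]
  rw [← two_mul, ← mul_assoc]
  have : ((2:ℝ≥0∞) * ENNReal.ofReal (1/24) * (24:ℝ≥0∞)⁻¹).toReal = 1/288 := by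
    rw [ENNReal.toReal_mul, ENNReal.toReal_mul]
    norm_num [ENNReal.toReal_inv, ENNReal.toReal_ofReal]
  rw [this]
  norm_num
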